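/- Let K be a field of characteristic zero, n ≥ 2, and let D = ∂_{x_1} + Σ_{i=2}^{n} (a_i·x_i + b_i)·∂_{x_i} be the K-derivation of K[x_1,…,x_n] with a_i, b_i ∈ K[x_1,…,x_{i-1}] for each i. If D is a simple derivation, then a_2 ∈ K[x_1] has degree at least 1, i.e., a_2 is not constant. -/

import Mathlib

open MvPolynomial

/-- A `K`-subspace `M` of `R` is a Mathieu–Zhao space if for all `a, b ∈ R` such that
`a ^ m ∈ M` for all `m ≥ 1`, there exists `N` such that `b * a ^ m ∈ M` for all `m ≥ N`. -/
def IsMathieuZhao (K : Type*) {R : Type*} [Field K] [CommRing R] [Algebra K R]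
    (M : Submodule K R) : Prop :=
  ∀ a b : R, (∀ m : ℕ, 1 ≤ m → a ^ m ∈ M) →
    ∃ N : ℕ, ∀ m : ℕ, N ≤ m → b * a ^ m ∈ M

/-- A `K`-derivation `D` of `R` is simple if the only ideals `I` of `R` with `D(I) ⊆ I`
are `0` and `R`. -/
def Derivation.IsSimple {K R : Type*} [CommRing K] [CommRing R] [Algebra K R]
    (D : Derivation K R R) : Prop :=
  ∀ I : Ideal R, (∀ a ∈ I, D a ∈ I) → I = ⊥ ∨ I = ⊤


/-- Antiderivative in char zero. -/
lemma exists_antideriv {K : Type*} [Field K] [CharZero K] (b : Polynomial K) :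
    ∃ f : Polynomial K, Polynomial.derivative f = b := by
  refine ⟨∑ k ∈ Finset.range (b.natDegree + 1),
    Polynomial.monomial (k + 1) (b.coeff k / (k + 1)), ?_⟩
  rw [map_sum]
  conv_rhs => rw [b.as_sum_range' (b.natDegree + 1) (Nat.lt_succ_self _)]
  refine Finset.sum_congr rfl fun k _ => ?_
  rw [Polynomial.derivative_monomial]
  congr 1
  push_cast
  exact div_mul_cancel₀ _ (Nat.cast_add_one_ne_zero k)

/-- Solving f' = c f + b in polynomials. -/
lemma exists_ode_sol {K : Type*} [Field K] [CharZero K] (c : K) (b : Polynomial K) :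
    ∃ f : Polynomial K, Polynomial.derivative f = Polynomial.C c * f + b := by
  rcases eq_or_ne c 0 with rfl | hc
  · obtain ⟨f, hf⟩ := exists_antideriv b
    exact ⟨f, by simp [hf]⟩
  · set N := b.natDegree
    refine ⟨-∑ k ∈ Finset.range (N + 1),
      Polynomial.C (c⁻¹ ^ (k + 1)) * (Polynomial.derivative^[k] b), ?_⟩
    have hzero : Polynomial.derivative^[N + 1] b = 0 :=
      Polynomial.iterate_derivative_eq_zero (Nat.lt_succ_self _)
    have lhs : Polynomial.derivative (∑ k ∈ Finset.range (N + 1),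
        Polynomial.C (c⁻¹ ^ (k + 1)) * (Polynomial.derivative^[k] b))
        = ∑ k ∈ Finset.range (N + 1),
          Polynomial.C (c⁻¹ ^ (k + 1)) * (Polynomial.derivative^[k + 1] b) := by
      rw [map_sum]
      refine Finset.sum_congr rfl fun k _ => ?_
      rw [Polynomial.derivative_mul, Polynomial.derivative_C, zero_mul, zero_add,
        ← Function.iterate_succ_apply' Polynomial.derivative]
    have hterm : ∀ k, Polynomial.C c *
        (Polynomial.C (c⁻¹ ^ (k + 1)) * (Polynomial.derivative^[k] b))
        = Polynomial.C (c⁻¹ ^ k) * (Polynomial.derivative^[k] b) := by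
      intro k
      rw [← mul_assoc, ← map_mul]
      congr 1
      rw [pow_succ, mul_comm (c⁻¹ ^ k), ← mul_assoc, mul_inv_cancel₀ hc, one_mul]
    rw [map_neg, lhs, Finset.sum_range_succ, hzero, mul_zero, add_zero, mul_neg,
      Finset.mul_sum]
    simp_rw [hterm]
    rw [Finset.sum_range_succ' (fun k => Polynomial.C (c⁻¹ ^ k) * (Polynomial.derivative^[k] b)) N]
    simp only [pow_zero, map_one, one_mul, Function.iterate_zero_apply]
    ring

lemma mem_supported_singleton {K : Type*} [Field K] {n : ℕ} {i : Fin n}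
    {p : MvPolynomial (Fin n) K} (hp : p ∈ supported K {i}) :
    ∃ q : Polynomial K, p = Polynomial.aeval (X i) q := by
  have h : supported K ({i} : Set (Fin n)) = Algebra.adjoin K {X i} := by
    rw [supported_eq_adjoin_X, Set.image_singleton]
  rw [h, Algebra.adjoin_singleton_eq_range_aeval] at hp
  obtain ⟨q, hq⟩ := hp
  exact ⟨q, hq.symm⟩

lemma eq_C_of_supported {K : Type*} [Field K] {n : ℕ} {i : Fin n}
    {p : MvPolynomial (Fin n) K} (hp : p ∈ supported K {i}) (hd : degreeOf i p = 0) :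
    p = C (coeff 0 p) := by
  have hsupp : ∀ m ∈ p.support, m = 0 := by
    intro m hm
    have key : ∀ j, m j = 0 := by
      intro j
      rcases eq_or_ne j i with rfl | hj
      · have h1 := monomial_le_degreeOf j hm
        omega
      · by_contra hmj
        have hjv : j ∈ p.vars := (mem_vars j).2 ⟨m, hm, Finsupp.mem_support_iff.2 hmj⟩
        have h2 := (mem_supported.1 hp) hjv
        simp only [Set.mem_singleton_iff] at h2
        exact hj h2
    ext j
    simp [key j]
  ext m
  rcases eq_or_ne m 0 with rfl | hm
  · simp
  · rw [coeff_C, if_neg (Ne.symm hm)]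
    by_contra h
    exact hm (hsupp m (mem_support_iff.2 h))


/-- For `D = ∂_{x₁} + Σ_{i=2}^{n} (aᵢ xᵢ + bᵢ) ∂_{xᵢ}` with
`aᵢ, bᵢ ∈ K[x₁, …, x_{i-1}]`: if `D` is simple, then `a₂ ∈ K[x₁]` has degree
at least 1 (in `x₁`), i.e. `a₂` is not constant. -/
theorem statement8 (K : Type*) [Field K] [CharZero K]
    (n : ℕ) (hn : 2 ≤ n)
    (a b : Fin n → MvPolynomial (Fin n) K)
    (ha : ∀ i : Fin n, a i ∈ supported K {j : Fin n | j < i})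
    (hb : ∀ i : Fin n, b i ∈ supported K {j : Fin n | j < i})
    (D : Derivation K (MvPolynomial (Fin n) K) (MvPolynomial (Fin n) K))
    (hD1 : D (X (⟨0, by omega⟩ : Fin n)) = 1)
    (hDi : ∀ i : Fin n, i ≠ ⟨0, by omega⟩ → D (X i) = a i * X i + b i)
    (hD : Derivation.IsSimple D) :
    1 ≤ degreeOf (⟨0, by omega⟩ : Fin n) (a ⟨1, by omega⟩) := by
  by_contra h
  set i0 : Fin n := ⟨0, by omega⟩
  set i1 : Fin n := ⟨1, by omega⟩
  have hset : {j : Fin n | j < i1} = ({i0} : Set (Fin n)) := by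
    ext j
    simp only [Set.mem_setOf_eq, Set.mem_singleton_iff, Fin.lt_def, Fin.ext_iff, Fin.val_mk, i0, i1]
    omega
  have ha1 : a i1 ∈ supported K ({i0} : Set (Fin n)) := hset ▸ ha i1
  have hb1 : b i1 ∈ supported K ({i0} : Set (Fin n)) := hset ▸ hb i1
  have hd0 : degreeOf i0 (a i1) = 0 := by omega
  set c : K := coeff 0 (a i1)
  have haC : a i1 = C c := eq_C_of_supported ha1 hd0
  obtain ⟨q, hq⟩ := mem_supported_singleton hb1
  obtain ⟨f, hf⟩ := exists_ode_sol c q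
  set F : MvPolynomial (Fin n) K := Polynomial.aeval (X i0) f
  set p : MvPolynomial (Fin n) K := X i1 - F
  have hDF : D F = C c * F + b i1 := by
    rw [show F = Polynomial.aeval (X i0) f from rfl, Derivation.map_aeval, hD1, smul_eq_mul,
      mul_one, hf, map_add, map_mul, Polynomial.aeval_C, ← hq]
    rfl
  have hi10 : i1 ≠ i0 := by simp [i0, i1, Fin.ext_iff]
  have hDp : D p = C c * p := by
    rw [show p = X i1 - F from rfl, map_sub, hDi i1 hi10, hDF, haC]
    ring
  have hinv : ∀ g ∈ Ideal.span {p}, D g ∈ Ideal.span {p} := by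
    intro g hg
    rw [Ideal.mem_span_singleton] at hg ⊢
    obtain ⟨h', rfl⟩ := hg
    rw [Derivation.leibniz, smul_eq_mul, smul_eq_mul, hDp]
    exact dvd_add (dvd_mul_right _ _) ⟨C c * h', by ring⟩
  rcases hD _ hinv with hbot | htop
  · -- p = 0 impossible
    have hp0 : p = 0 := by
      have : p ∈ Ideal.span {p} := Ideal.mem_span_singleton_self p
      rw [hbot] at this
      simpa using this
    have hX : (X i1 : MvPolynomial (Fin n) K) = F := by
      have := sub_eq_zero.1 hp0
      exact this
    have hFs : F ∈ supported K ({i0} : Set (Fin n)) := by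
      have h1 : supported K ({i0} : Set (Fin n)) = Algebra.adjoin K {X i0} := by
        rw [supported_eq_adjoin_X, Set.image_singleton]
      rw [h1, Algebra.adjoin_singleton_eq_range_aeval]
      exact ⟨f, rfl⟩
    rw [← hX] at hFs
    have := (X_mem_supported (R := K)).1 hFs
    simp only [Set.mem_singleton_iff] at this
    exact hi10 this
  · -- 1 ∈ span {p} impossible: evaluate at a zero of p
    have h1 : (1 : MvPolynomial (Fin n) K) ∈ Ideal.span {p} := htop ▸ Submodule.mem_top
    rw [Ideal.mem_span_singleton] at h1
    obtain ⟨g, hg⟩ := h1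
    set v : Fin n → K := fun j => if j = i1 then Polynomial.aeval (0 : K) f else 0
    have hv : aeval v p = 0 := by
      rw [show p = X i1 - F from rfl, map_sub, aeval_X,
        show (aeval v) F = Polynomial.aeval (aeval v (X i0)) f from
          (Polynomial.aeval_algHom_apply (aeval v) (X i0) f).symm, aeval_X]
      simp [v, Ne.symm hi10]
    have := congrArg (aeval v) hg
    rw [map_one, map_mul, hv, zero_mul] at this
    exact one_ne_zero this
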